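/- For an algebraic curvature operator R on ℝ^n with traceless Ricci tensor Ric₀ and Weyl part W, |⟨Ric₀ ∧ Ric₀, W⟩| ≤ √((n-2)/(2(n-1)))·‖W‖·|Ric₀|². -/

import Mathlib

open scoped BigOperators

namespace PaperStmt

noncomputable section Work

variable {N : Type*} [Fintype N] [DecidableEq N]

/-- Kronecker delta. -/
def kd (i j : N) : ℝ := if i = j then 1 else 0

/-- Algebraic curvature operator: antisymmetry in first and last pairs,
pair-interchange symmetry, and the first Bianchi identity. -/
def IsCurvOp (R : N → N → N → N → ℝ) : Prop :=
  (∀ i j k l, R j i k l = - R i j k l) ∧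
  (∀ i j k l, R i j l k = - R i j k l) ∧
  (∀ i j k l, R k l i j = R i j k l) ∧
  (∀ i j k l, R i j k l + R j k i l + R k i j l = 0)

/-- Ricci tensor. -/
def ric (R : N → N → N → N → ℝ) (i j : N) : ℝ := ∑ k, R i k j k

/-- Scalar curvature. -/
def scal (R : N → N → N → N → ℝ) : ℝ := ∑ i, ric R i i

/-- Inner product of symmetric 2-tensors. -/
def inner2 (A B : N → N → ℝ) : ℝ := ∑ i, ∑ j, A i j * B i j

def norm2sq (A : N → N → ℝ) : ℝ := inner2 A A

/-- Inner product of curvature operators: (1/4) Σ X_{ijkl} Y_{ijkl}. -/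
def inner4 (X Y : N → N → N → N → ℝ) : ℝ :=
  (1/4) * ∑ i, ∑ j, ∑ k, ∑ l, X i j k l * Y i j k l

def norm4sq (X : N → N → N → N → ℝ) : ℝ := inner4 X X

/-- Wedge (Kulkarni–Nomizu type) product of symmetric endomorphisms. -/
def wedge (A B : N → N → ℝ) (i j k l : N) : ℝ :=
  (1/2) * (A i k * B j l + B i k * A j l - A i l * B j k - A j k * B i l)

/-- Normalized scalar curvature λ̄ = scal/n. -/
def lam (n : ℕ) (R : N → N → N → N → ℝ) : ℝ := scal R / n

/-- Traceless Ricci tensor. -/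
def ric0 (n : ℕ) (R : N → N → N → N → ℝ) (i j : N) : ℝ :=
  ric R i j - lam n R * kd i j

/-- Scalar-curvature part R_I = (λ̄/(n-1)) id∧id. -/
def RI (n : ℕ) (R : N → N → N → N → ℝ) (i j k l : N) : ℝ :=
  (lam n R / ((n : ℝ) - 1)) * wedge kd kd i j k l

/-- Traceless-Ricci part R_{Ric₀} = (2/(n-2)) Ric₀ ∧ id. -/
def RRic0 (n : ℕ) (R : N → N → N → N → ℝ) (i j k l : N) : ℝ :=
  (2 / ((n : ℝ) - 2)) * wedge (ric0 n R) kd i j k l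

/-- Weyl part W = R - R_I - R_{Ric₀}. -/
def weyl (n : ℕ) (R : N → N → N → N → ℝ) (i j k l : N) : ℝ :=
  R i j k l - RI n R i j k l - RRic0 n R i j k l

/-- Square of a curvature operator. -/
def csq (R : N → N → N → N → ℝ) (i j k l : N) : ℝ :=
  (1/2) * ∑ p, ∑ q, R i j p q * R k l p q

/-- Hamilton's sharp operation R♯. -/
def sharp (R : N → N → N → N → ℝ) (i j k l : N) : ℝ :=
  ∑ p, ∑ q, (R i p k q * R j p l q - R i p l q * R j p k q)

/-- Hamilton's quadratic term Q(R) = R² + R♯. -/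
def Q (R : N → N → N → N → ℝ) (i j k l : N) : ℝ := csq R i j k l + sharp R i j k l

/-- Square of a symmetric 2-tensor. -/
def matsq (A : N → N → ℝ) (i j : N) : ℝ := ∑ k, A i k * A k j

/-- Traceless part of a symmetric 2-tensor. -/
def tless (n : ℕ) (A : N → N → ℝ) (i j : N) : ℝ :=
  A i j - ((∑ k, A k k) / n) * kd i j


set_option linter.unusedSectionVars false in
lemma sum3_rot (f : N → N → N → ℝ) :
    ∑ i, ∑ j, ∑ l, f i j l = ∑ j, ∑ l, ∑ i, f i j l := by
  rw [Finset.sum_comm]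
  exact Finset.sum_congr rfl fun j _ => Finset.sum_comm

lemma contr (X : N → N → N → N → ℝ)
    (h1 : ∀ i j k l, X j i k l = - X i j k l)
    (h2 : ∀ i j k l, X i j l k = - X i j k l)
    (B : N → N → ℝ) :
    inner4 (wedge B kd) X = (1/2) * inner2 B (ric X) := by
  have base : ∀ (C : N → N → ℝ) (Y : N → N → N → N → ℝ),
      (∑ i : N, ∑ j : N, ∑ k : N, C i k * Y i j k j)
        = ∑ i : N, ∑ k : N, C i k * ∑ j : N, Y i j k j := by
    intro C Y
    refine Finset.sum_congr rfl fun i _ => ?_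
    rw [Finset.sum_comm]
    exact Finset.sum_congr rfl fun k _ => (Finset.mul_sum _ _ _).symm
  set I := ∑ i, ∑ j, B i j * ∑ k, X i k j k with hI
  have key : ∀ i j k l : N,
      wedge B kd i j k l * X i j k l =
      (1/2) * (B i k * (kd j l * X i j k l) + B j l * (kd i k * X i j k l)
        - B i l * (kd j k * X i j k l) - B j k * (kd i l * X i j k l)) := by
    intro i j k l; simp [wedge]; ring
  have t1 : (∑ i : N, ∑ j : N, ∑ k : N, ∑ l : N, B i k * (kd j l * X i j k l)) = I := by
    have e : ∀ i j k : N, (∑ l : N, B i k * (kd j l * X i j k l)) = B i k * X i j k j := by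
      intro i j k; simp [kd, ite_mul, mul_ite, Finset.sum_ite_eq]
    simp only [e]; exact base B X
  have t2 : (∑ i : N, ∑ j : N, ∑ k : N, ∑ l : N, B j l * (kd i k * X i j k l)) = I := by
    have e : ∀ i j : N, (∑ k : N, ∑ l : N, B j l * (kd i k * X i j k l))
        = ∑ l : N, B j l * X j i l i := by
      intro i j
      rw [Finset.sum_comm]
      have e2 : ∀ l : N, (∑ k : N, B j l * (kd i k * X i j k l)) = B j l * X i j i l := by
        intro l; simp [kd, ite_mul, mul_ite, Finset.sum_ite_eq]
      simp only [e2]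
      refine Finset.sum_congr rfl fun l _ => ?_
      have a := h1 i j l i
      have b := h2 i j l i
      have : X i j i l = X j i l i := by linarith
      rw [this]
    simp only [e]
    rw [sum3_rot (fun i j l => B j l * X j i l i)]
    exact Finset.sum_congr rfl fun j _ => Finset.sum_congr rfl fun l _ =>
      (Finset.mul_sum _ _ _).symm
  have t3 : (∑ i : N, ∑ j : N, ∑ k : N, ∑ l : N, B i l * (kd j k * X i j k l)) = -I := by
    have e : ∀ i j : N, (∑ k : N, ∑ l : N, B i l * (kd j k * X i j k l))
        = ∑ l : N, -(B i l * X i j l j) := by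
      intro i j
      rw [Finset.sum_comm]
      have e2 : ∀ l : N, (∑ k : N, B i l * (kd j k * X i j k l)) = B i l * X i j j l := by
        intro l; simp [kd, ite_mul, mul_ite, Finset.sum_ite_eq]
      simp only [e2]
      refine Finset.sum_congr rfl fun l _ => ?_
      have b := h2 i j l j
      have : X i j j l = -X i j l j := by linarith
      rw [this, mul_neg]
    simp only [e, Finset.sum_neg_distrib]
    rw [neg_inj]
    exact base B X
  have t4 : (∑ i : N, ∑ j : N, ∑ k : N, ∑ l : N, B j k * (kd i l * X i j k l)) = -I := by
    have e : ∀ i j k : N, (∑ l : N, B j k * (kd i l * X i j k l)) = -(B j k * X j i k i) := by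
      intro i j k
      have e2 : (∑ l : N, B j k * (kd i l * X i j k l)) = B j k * X i j k i := by
        simp [kd, ite_mul, mul_ite, Finset.sum_ite_eq]
      rw [e2]
      have a := h1 i j k i
      have : X i j k i = -X j i k i := by linarith
      rw [this, mul_neg]
    simp only [e, Finset.sum_neg_distrib]
    rw [neg_inj]
    rw [sum3_rot (fun i j k => B j k * X j i k i)]
    exact Finset.sum_congr rfl fun j _ => Finset.sum_congr rfl fun k _ =>
      (Finset.mul_sum _ _ _).symm
  have split : (∑ i : N, ∑ j : N, ∑ k : N, ∑ l : N, wedge B kd i j k l * X i j k l)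
      = (1/2) * ((∑ i : N, ∑ j : N, ∑ k : N, ∑ l : N, B i k * (kd j l * X i j k l))
        + (∑ i : N, ∑ j : N, ∑ k : N, ∑ l : N, B j l * (kd i k * X i j k l))
        - (∑ i : N, ∑ j : N, ∑ k : N, ∑ l : N, B i l * (kd j k * X i j k l))
        - (∑ i : N, ∑ j : N, ∑ k : N, ∑ l : N, B j k * (kd i l * X i j k l))) := by
    simp only [key, ← Finset.mul_sum, Finset.sum_add_distrib, Finset.sum_sub_distrib]
  have goal2 : inner2 B (ric X) = I := rfl
  rw [inner4, split, t1, t2, t3, t4, goal2]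
  ring

lemma ric_wedge_kd (C : N → N → ℝ) (i j : N) :
    ric (wedge C kd) i j
      = (1/2) * (((Fintype.card N : ℝ) - 2) * C i j + (∑ k, C k k) * kd i j) := by
  rw [ric]
  have e : ∀ k : N, wedge C kd i k j k
      = (1/2) * (C i j * kd k k + kd i j * C k k - C i k * kd k j - C k j * kd i k) := by
    intro k; rw [wedge]
  simp only [e, kd, if_pos rfl, mul_one]
  simp only [mul_add, mul_sub, Finset.sum_add_distrib, Finset.sum_sub_distrib,
    mul_ite, mul_zero, ite_mul, zero_mul, Finset.sum_ite_eq, Finset.sum_ite_eq',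
    Finset.mem_univ, if_true, Finset.sum_const, Finset.card_univ, nsmul_eq_mul,
    ← Finset.mul_sum]
  by_cases h : i = j <;> simp [h, ← Finset.mul_sum] <;> ring

set_option linter.unusedSectionVars false in
lemma ric_wedge_self (A : N → N → ℝ) (i j : N) :
    ric (wedge A A) i j = A i j * (∑ k, A k k) - matsq A i j := by
  rw [ric, matsq]
  have e : ∀ k : N, wedge A A i k j k = A i j * A k k - A i k * A k j := by
    intro k; rw [wedge]; ring
  simp only [e, Finset.sum_sub_distrib, ← Finset.mul_sum]

set_option linter.unusedSectionVars false in
lemma sum4_pair_swap (f : N → N → N → N → ℝ) :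
    ∑ i, ∑ j, ∑ k, ∑ l, f i j k l = ∑ k, ∑ l, ∑ i, ∑ j, f i j k l := by
  calc ∑ i, ∑ j, ∑ k, ∑ l, f i j k l
      = ∑ i, ∑ k, ∑ j, ∑ l, f i j k l :=
        Finset.sum_congr rfl fun i _ => Finset.sum_comm
    _ = ∑ k, ∑ i, ∑ j, ∑ l, f i j k l := Finset.sum_comm
    _ = ∑ k, ∑ i, ∑ l, ∑ j, f i j k l :=
        Finset.sum_congr rfl fun k _ => Finset.sum_congr rfl fun i _ => Finset.sum_comm
    _ = ∑ k, ∑ l, ∑ i, ∑ j, f i j k l :=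
        Finset.sum_congr rfl fun k _ => Finset.sum_comm

set_option linter.unusedSectionVars false in
lemma prod_split (p q : N → N → ℝ) :
    ∑ i : N, ∑ j : N, ∑ k : N, ∑ l : N, p i k * q j l
      = (∑ i : N, ∑ k : N, p i k) * (∑ j : N, ∑ l : N, q j l) := by
  calc ∑ i : N, ∑ j : N, ∑ k : N, ∑ l : N, p i k * q j l
      = ∑ i : N, ∑ j : N, (∑ k : N, p i k) * (∑ l : N, q j l) :=
        Finset.sum_congr rfl fun i _ => Finset.sum_congr rfl fun j _ =>
          (Finset.sum_mul_sum _ _ _ _).symm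
    _ = ∑ i : N, (∑ k : N, p i k) * (∑ j : N, ∑ l : N, q j l) :=
        Finset.sum_congr rfl fun i _ => (Finset.mul_sum _ _ _).symm
    _ = _ := (Finset.sum_mul _ _ _).symm

set_option linter.unusedSectionVars false in
lemma sum4_const_mul (c : ℝ) (f : N → N → N → N → ℝ) :
    ∑ i : N, ∑ j : N, ∑ k : N, ∑ l : N, c * f i j k l
      = c * ∑ i : N, ∑ j : N, ∑ k : N, ∑ l : N, f i j k l := by
  simp only [← Finset.mul_sum]

set_option linter.unusedSectionVars false in
lemma sum2_const_mul (c : ℝ) (f : N → N → ℝ) :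
    ∑ i : N, ∑ j : N, c * f i j = c * ∑ i : N, ∑ j : N, f i j := by
  simp only [← Finset.mul_sum]

set_option linter.unusedSectionVars false in
lemma inner4_wedge_self (A : N → N → ℝ) (hA : ∀ i j, A j i = A i j) :
    inner4 (wedge A A) (wedge A A)
      = (1/2) * ((inner2 A A)^2 - inner2 (matsq A) (matsq A)) := by
  have e : ∀ i j k l : N, wedge A A i j k l * wedge A A i j k l
      = (A i k * A i k) * (A j l * A j l) + (A i l * A i l) * (A j k * A j k)
        - 2 * ((A i k * A i l) * (A j k * A j l)) := by
    intro i j k l; rw [wedge]; ring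
  rw [inner4]
  simp only [e, Finset.sum_add_distrib, Finset.sum_sub_distrib]
  rw [sum4_const_mul 2 (fun i j k l => (A i k * A i l) * (A j k * A j l))]
  have s1 : ∑ i : N, ∑ j : N, ∑ k : N, ∑ l : N, (A i k * A i k) * (A j l * A j l)
      = (inner2 A A)^2 := by
    rw [prod_split (fun i k => A i k * A i k) (fun j l => A j l * A j l)]
    rw [inner2]; ring
  have s2 : ∑ i : N, ∑ j : N, ∑ k : N, ∑ l : N, (A i l * A i l) * (A j k * A j k)
      = (inner2 A A)^2 := by
    have : ∀ i j : N, ∑ k : N, ∑ l : N, (A i l * A i l) * (A j k * A j k)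
        = ∑ k : N, ∑ l : N, (A i k * A i k) * (A j l * A j l) := by
      intro i j; rw [Finset.sum_comm]
    simp only [this]
    rw [prod_split (fun i k => A i k * A i k) (fun j l => A j l * A j l), inner2]; ring
  have s3 : ∑ i : N, ∑ j : N, ∑ k : N, ∑ l : N, (A i k * A i l) * (A j k * A j l)
      = inner2 (matsq A) (matsq A) := by
    rw [sum4_pair_swap (fun i j k l => (A i k * A i l) * (A j k * A j l))]
    rw [inner2]
    refine Finset.sum_congr rfl fun k _ => Finset.sum_congr rfl fun l _ => ?_
    rw [(Finset.sum_mul_sum Finset.univ Finset.univ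
      (fun i => A i k * A i l) (fun j => A j k * A j l)).symm]
    have hm : matsq A k l = ∑ i : N, A i k * A i l := by
      rw [matsq]
      exact Finset.sum_congr rfl fun i _ => by rw [hA k i]
    rw [hm]
  rw [s1, s2, s3]; ring

set_option linter.unusedSectionVars false in
lemma inner4_comm (X Y : N → N → N → N → ℝ) : inner4 X Y = inner4 Y X := by
  simp only [inner4, mul_comm]

set_option linter.unusedSectionVars false in
lemma inner4_comb (X Y Z E : N → N → N → N → ℝ) (c d : ℝ) :
    inner4 (fun i j k l => X i j k l + c * Y i j k l + d * Z i j k l) E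
      = inner4 X E + c * inner4 Y E + d * inner4 Z E := by
  simp only [inner4, add_mul, Finset.sum_add_distrib]
  have e1 : ∀ i j k l : N, (c * Y i j k l) * E i j k l = c * (Y i j k l * E i j k l) := by
    intro i j k l; ring
  have e2 : ∀ i j k l : N, (d * Z i j k l) * E i j k l = d * (Z i j k l * E i j k l) := by
    intro i j k l; ring
  simp only [e1, e2, sum4_const_mul]
  ring

set_option linter.unusedSectionVars false in
lemma inner4_self_nonneg (X : N → N → N → N → ℝ) : 0 ≤ inner4 X X := by
  rw [inner4]
  have : (0:ℝ) ≤ ∑ i : N, ∑ j : N, ∑ k : N, ∑ l : N, X i j k l * X i j k l :=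
    Finset.sum_nonneg fun i _ => Finset.sum_nonneg fun j _ =>
      Finset.sum_nonneg fun k _ => Finset.sum_nonneg fun l _ => mul_self_nonneg _
  linarith

set_option linter.unusedSectionVars false in
lemma inner2_self_nonneg (A : N → N → ℝ) : 0 ≤ inner2 A A :=
  Finset.sum_nonneg fun i _ => Finset.sum_nonneg fun j _ => mul_self_nonneg _

set_option linter.unusedSectionVars false in
lemma sum4_flat (f : N → N → N → N → ℝ) :
    ∑ i : N, ∑ j : N, ∑ k : N, ∑ l : N, f i j k l
      = ∑ p : N × N × N × N, f p.1 p.2.1 p.2.2.1 p.2.2.2 := by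
  simp [Fintype.sum_prod_type]

set_option linter.unusedSectionVars false in
lemma inner4_cs (X Y : N → N → N → N → ℝ) :
    (inner4 X Y)^2 ≤ inner4 X X * inner4 Y Y := by
  have hx := sum4_flat (fun i j k l => X i j k l * X i j k l)
  have hy := sum4_flat (fun i j k l => Y i j k l * Y i j k l)
  have hxy := sum4_flat (fun i j k l => X i j k l * Y i j k l)
  have cs := Finset.sum_mul_sq_le_sq_mul_sq Finset.univ
    (fun p : N × N × N × N => X p.1 p.2.1 p.2.2.1 p.2.2.2)
    (fun p : N × N × N × N => Y p.1 p.2.1 p.2.2.1 p.2.2.2)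
  simp only [inner4, hx, hy, hxy]
  simp only [pow_two] at cs ⊢
  nlinarith [cs]

set_option linter.unusedSectionVars false in
lemma inner2_comm (A B : N → N → ℝ) : inner2 A B = inner2 B A := by
  simp only [inner2, mul_comm]

lemma inner2_kd_right (C : N → N → ℝ) : inner2 C kd = ∑ i, C i i := by
  simp [inner2, kd, mul_ite, mul_one, mul_zero, Finset.sum_ite_eq, Finset.sum_ite_eq']

set_option linter.unusedSectionVars false in
lemma inner2_congr_right (E X Y : N → N → ℝ) (h : ∀ i j, X i j = Y i j) :
    inner2 E X = inner2 E Y := by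
  rw [inner2, inner2]
  exact Finset.sum_congr rfl fun i _ => Finset.sum_congr rfl fun j _ => by rw [h i j]

set_option linter.unusedSectionVars false in
lemma inner2_comb (E X Y : N → N → ℝ) (c : ℝ) :
    inner2 E (fun i j => X i j + c * Y i j) = inner2 E X + c * inner2 E Y := by
  simp only [inner2, mul_add, Finset.sum_add_distrib]
  have e : ∀ i j : N, E i j * (c * Y i j) = c * (E i j * Y i j) := by intro i j; ring
  simp only [e, sum2_const_mul]

set_option linter.unusedSectionVars false in
lemma inner2_smul_right (E X : N → N → ℝ) (c : ℝ) :
    inner2 E (fun i j => c * X i j) = c * inner2 E X := by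
  simp only [inner2]
  have e : ∀ i j : N, E i j * (c * X i j) = c * (E i j * X i j) := by intro i j; ring
  simp only [e, sum2_const_mul]

set_option linter.unusedSectionVars false in
lemma inner2_neg_right (E X : N → N → ℝ) :
    inner2 E (fun i j => -(X i j)) = -inner2 E X := by
  simp only [inner2, mul_neg, Finset.sum_neg_distrib]

set_option linter.unusedSectionVars false in
lemma wedge_a1 (C D : N → N → ℝ) (i j k l : N) : wedge C D j i k l = - wedge C D i j k l := by
  rw [wedge, wedge]; ring

set_option linter.unusedSectionVars false in
lemma wedge_a2 (C D : N → N → ℝ) (i j k l : N) : wedge C D i j l k = - wedge C D i j k l := by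
  rw [wedge, wedge]; ring

set_option maxHeartbeats 2000000 in
/-- `|⟨Ric₀ ∧ Ric₀, W⟩| ≤ √((n-2)/(2(n-1))) ‖W‖ |Ric₀|²`. -/
theorem stmt8 {n : ℕ} (hn : 4 ≤ n) (R : Fin n → Fin n → Fin n → Fin n → ℝ)
    (hR : IsCurvOp R) :
    |inner4 (wedge (ric0 n R) (ric0 n R)) (weyl n R)| ≤
      Real.sqrt (((n : ℝ) - 2) / (2 * ((n : ℝ) - 1))) *
        Real.sqrt (norm4sq (weyl n R)) * norm2sq (ric0 n R) := by
  classical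
  obtain ⟨hR1, hR2, hR3, hR4⟩ := hR
  set A := ric0 n R with hA
  have hn4 : (4:ℝ) ≤ (n:ℝ) := by exact_mod_cast hn
  have hnpos : (0:ℝ) < (n:ℝ) := by linarith
  have hn1 : (0:ℝ) < (n:ℝ) - 1 := by linarith
  have hn2 : (0:ℝ) < (n:ℝ) - 2 := by linarith
  have hcard : ((Fintype.card (Fin n)) : ℝ) = (n:ℝ) := by simp
  -- symmetry of A
  have hricsym : ∀ i j, ric R j i = ric R i j := by
    intro i j; rw [ric, ric]
    exact Finset.sum_congr rfl fun k _ => hR3 i k j k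
  have hkdsym : ∀ i j : Fin n, kd j i = kd i j := by
    intro i j; rw [kd, kd]; by_cases h : i = j <;> simp [h, eq_comm]
  have hAsym : ∀ i j, A j i = A i j := by
    intro i j; rw [hA]; rw [ric0, ric0, hricsym i j, hkdsym i j]
  -- trace of A is 0
  have htrA : ∑ i, A i i = 0 := by
    have e : ∀ i : Fin n, A i i = ric R i i - scal R / (n:ℝ) := by
      intro i; rw [hA, ric0, lam, kd, if_pos rfl, mul_one]
    rw [Finset.sum_congr rfl fun i _ => e i, Finset.sum_sub_distrib]
    rw [Finset.sum_const, Finset.card_univ, Fintype.card_fin, nsmul_eq_mul, ← scal]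
    field_simp; ring
  -- the traceless square S and scalars
  set a := inner2 A A with ha
  have hann : 0 ≤ a := inner2_self_nonneg A
  set S : Fin n → Fin n → ℝ := fun i j => matsq A i j - (a/(n:ℝ)) * kd i j with hS
  set s2 := inner2 S S with hs2
  have hs2nn : 0 ≤ s2 := inner2_self_nonneg S
  have htrM : ∑ k, matsq A k k = a := by
    rw [ha, inner2]
    refine Finset.sum_congr rfl fun k _ => ?_
    rw [matsq]
    exact Finset.sum_congr rfl fun i _ => by rw [hAsym i k]
  have hkdkd : inner2 (kd : Fin n → Fin n → ℝ) kd = (n:ℝ) := by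
    rw [inner2_kd_right]
    simp [kd]
  have htrS : ∑ k, S k k = 0 := by
    rw [hS]
    simp only [kd, if_pos rfl, mul_one, Finset.sum_sub_distrib]
    rw [htrM, Finset.sum_const, Finset.card_univ, Fintype.card_fin, nsmul_eq_mul]
    field_simp; simp
  have hMS : ∀ i j, matsq A i j = S i j + (a/(n:ℝ)) * kd i j := by
    intro i j; rw [hS]; ring
  have hSkd : inner2 S kd = 0 := by rw [inner2_kd_right, htrS]
  have hSM : inner2 S (matsq A) = s2 := by
    rw [inner2_congr_right S (matsq A) _ hMS, inner2_comb S S kd (a/(n:ℝ)), hSkd, ← hs2]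
    ring
  have hb : inner2 (matsq A) (matsq A) = s2 + a^2/(n:ℝ) := by
    rw [inner2_congr_right (matsq A) (matsq A) _ hMS,
      inner2_comb (matsq A) S kd (a/(n:ℝ)), inner2_comm (matsq A) S, hSM,
      inner2_kd_right, htrM]
    field_simp
  -- ricci values
  have hricAA : ∀ i j, ric (wedge A A) i j = -(matsq A i j) := by
    intro i j; rw [ric_wedge_self A i j, htrA]; ring
  have hricSkd : ∀ i j, ric (wedge S kd) i j = (1/2) * (((n:ℝ)-2) * S i j) := by
    intro i j; rw [ric_wedge_kd S i j, htrS, hcard]; ring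
  have hrickdkd : ∀ i j : Fin n, ric (wedge kd kd) i j = ((n:ℝ)-1) * kd i j := by
    intro i j
    rw [ric_wedge_kd kd i j, hcard]
    have : ∑ k : Fin n, kd k k = (n:ℝ) := by simp [kd]
    rw [this]; ring
  -- Weyl part: antisymmetries and vanishing Ricci
  have hW1 : ∀ i j k l, weyl n R j i k l = - weyl n R i j k l := by
    intro i j k l
    simp only [weyl, RI, RRic0]
    rw [hR1 i j k l, wedge_a1 kd kd i j k l, wedge_a1 (ric0 n R) kd i j k l]
    ring
  have hW2 : ∀ i j k l, weyl n R i j l k = - weyl n R i j k l := by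
    intro i j k l
    simp only [weyl, RI, RRic0]
    rw [hR2 i j k l, wedge_a2 kd kd i j k l, wedge_a2 (ric0 n R) kd i j k l]
    ring
  have hricW : ∀ i j, ric (weyl n R) i j = 0 := by
    intro i j
    have e : ric (weyl n R) i j = ric R i j
        - (lam n R/((n:ℝ)-1)) * ric (wedge kd kd) i j
        - (2/((n:ℝ)-2)) * ric (wedge (ric0 n R) kd) i j := by
      simp only [ric, weyl, RI, RRic0, Finset.sum_sub_distrib, Finset.mul_sum]
    rw [e, hrickdkd i j]
    rw [ric_wedge_kd (ric0 n R) i j, hcard]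
    have htrA' : ∑ k, ric0 n R k k = 0 := htrA
    rw [htrA']
    have hAij : ric0 n R i j = ric R i j - lam n R * kd i j := rfl
    rw [hAij]
    field_simp
    ring
  -- values of inner products
  have v_SkdW : inner4 (wedge S kd) (weyl n R) = 0 := by
    rw [contr (weyl n R) hW1 hW2 S]
    rw [inner2_congr_right S (ric (weyl n R)) (fun _ _ => 0) hricW]
    simp [inner2]
  have v_kdkdW : inner4 (wedge kd kd) (weyl n R) = 0 := by
    rw [contr (weyl n R) hW1 hW2 kd]
    rw [inner2_congr_right kd (ric (weyl n R)) (fun _ _ => 0) hricW]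
    simp [inner2]
  have v_SkdAA : inner4 (wedge S kd) (wedge A A) = -(1/2) * s2 := by
    rw [contr (wedge A A) (wedge_a1 A A) (wedge_a2 A A) S]
    rw [inner2_congr_right S (ric (wedge A A)) (fun i j => -(matsq A i j)) hricAA]
    rw [inner2_neg_right, hSM]; ring
  have v_kdkdAA : inner4 (wedge kd kd) (wedge A A) = -(1/2) * a := by
    rw [contr (wedge A A) (wedge_a1 A A) (wedge_a2 A A) kd]
    rw [inner2_congr_right kd (ric (wedge A A)) (fun i j => -(matsq A i j)) hricAA]
    rw [inner2_neg_right, inner2_comm kd (matsq A), inner2_kd_right, htrM]; ring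
  have v_SkdSkd : inner4 (wedge S kd) (wedge S kd) = (((n:ℝ)-2)/4) * s2 := by
    rw [contr (wedge S kd) (wedge_a1 S kd) (wedge_a2 S kd) S]
    rw [inner2_congr_right S (ric (wedge S kd)) (fun i j => ((1/2) * ((n:ℝ)-2)) * S i j)
      (fun i j => by rw [hricSkd i j]; ring)]
    rw [inner2_smul_right, ← hs2]; ring
  have v_kdkdSkd : inner4 (wedge kd kd) (wedge S kd) = 0 := by
    rw [contr (wedge S kd) (wedge_a1 S kd) (wedge_a2 S kd) kd]
    rw [inner2_congr_right kd (ric (wedge S kd)) (fun i j => ((1/2) * ((n:ℝ)-2)) * S i j)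
      (fun i j => by rw [hricSkd i j]; ring)]
    rw [inner2_smul_right, inner2_comm kd S, hSkd]; ring
  have v_kdkdkdkd : inner4 (wedge (kd : Fin n → Fin n → ℝ) kd) (wedge kd kd) = (n:ℝ) * ((n:ℝ)-1) / 2 := by
    rw [contr (wedge kd kd) (wedge_a1 kd kd) (wedge_a2 kd kd) kd]
    rw [inner2_congr_right kd (ric (wedge kd kd)) (fun i j => ((n:ℝ)-1) * kd i j)
      (fun i j => by rw [hrickdkd i j])]
    rw [inner2_smul_right, hkdkd]; ring
  have v_AAAA : inner4 (wedge A A) (wedge A A) = (1/2) * (a^2 - (s2 + a^2/(n:ℝ))) := by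
    rw [inner4_wedge_self A hAsym, ← ha, hb]
  -- the comparison tensor T
  set c : ℝ := 2/((n:ℝ)-2) with hc
  set d : ℝ := a/((n:ℝ)*((n:ℝ)-1)) with hd
  set T : Fin n → Fin n → Fin n → Fin n → ℝ :=
    fun i j k l => wedge A A i j k l + c * wedge S kd i j k l + d * wedge kd kd i j k l
    with hT
  have expand : ∀ E : Fin n → Fin n → Fin n → Fin n → ℝ,
      inner4 T E = inner4 (wedge A A) E + c * inner4 (wedge S kd) E
        + d * inner4 (wedge kd kd) E := by
    intro E; rw [hT]; exact inner4_comb _ _ _ E c d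
  have hTW : inner4 T (weyl n R) = inner4 (wedge A A) (weyl n R) := by
    rw [expand, v_SkdW, v_kdkdW]; ring
  have hTT : inner4 T T = (((n:ℝ)-2)/(2*((n:ℝ)-1))) * a^2 - ((n:ℝ)/(2*((n:ℝ)-2))) * s2 := by
    rw [expand T]
    rw [inner4_comm (wedge A A) T, inner4_comm (wedge S kd) T, inner4_comm (wedge kd kd) T]
    rw [expand (wedge A A), expand (wedge S kd), expand (wedge kd kd)]
    rw [v_AAAA, v_SkdAA, v_kdkdAA, v_SkdSkd, v_kdkdSkd, v_kdkdkdkd]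
    rw [inner4_comm (wedge A A) (wedge S kd), v_SkdAA]
    rw [inner4_comm (wedge A A) (wedge kd kd), v_kdkdAA]
    rw [inner4_comm (wedge S kd) (wedge kd kd), v_kdkdSkd]
    rw [hc, hd]
    field_simp
    ring
  -- conclusion
  have hTTle : inner4 T T ≤ (((n:ℝ)-2)/(2*((n:ℝ)-1))) * a^2 := by
    rw [hTT]
    have h1 : 0 ≤ ((n:ℝ)/(2*((n:ℝ)-2))) * s2 := by positivity
    linarith
  have hWnn : 0 ≤ inner4 (weyl n R) (weyl n R) := inner4_self_nonneg (weyl n R)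
  have hv2 : (inner4 (wedge A A) (weyl n R))^2
      ≤ ((((n:ℝ)-2)/(2*((n:ℝ)-1))) * a^2) * inner4 (weyl n R) (weyl n R) := by
    rw [← hTW]
    refine le_trans (inner4_cs T (weyl n R)) ?_
    exact mul_le_mul_of_nonneg_right hTTle hWnn
  have hq : 0 ≤ (((n:ℝ)-2)/(2*((n:ℝ)-1))) := by positivity
  have habs : |inner4 (wedge A A) (weyl n R)|
      ≤ Real.sqrt (((((n:ℝ)-2)/(2*((n:ℝ)-1))) * a^2) * inner4 (weyl n R) (weyl n R)) := by
    rw [← Real.sqrt_sq_eq_abs]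
    exact Real.sqrt_le_sqrt hv2
  have hsplit : Real.sqrt (((((n:ℝ)-2)/(2*((n:ℝ)-1))) * a^2) * inner4 (weyl n R) (weyl n R))
      = Real.sqrt ((((n:ℝ)-2)/(2*((n:ℝ)-1)))) * Real.sqrt (inner4 (weyl n R) (weyl n R)) * a := by
    rw [show ((((n:ℝ)-2)/(2*((n:ℝ)-1))) * a^2) * inner4 (weyl n R) (weyl n R)
      = ((((n:ℝ)-2)/(2*((n:ℝ)-1))) * inner4 (weyl n R) (weyl n R)) * a^2 by ring]
    rw [Real.sqrt_mul (by positivity) (a^2), Real.sqrt_sq hann,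
      Real.sqrt_mul hq (inner4 (weyl n R) (weyl n R))]
  have hfin : norm4sq (weyl n R) = inner4 (weyl n R) (weyl n R) := rfl
  have hfin2 : norm2sq A = a := rfl
  calc |inner4 (wedge A A) (weyl n R)|
      ≤ Real.sqrt (((((n:ℝ)-2)/(2*((n:ℝ)-1))) * a^2) * inner4 (weyl n R) (weyl n R)) := habs
    _ = Real.sqrt ((((n:ℝ)-2)/(2*((n:ℝ)-1)))) * Real.sqrt (norm4sq (weyl n R)) * norm2sq A := by
        rw [hsplit, hfin, hfin2]


end Work

end PaperStmt
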